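/- Let α, β be labels and σ₁, σ₂, σ₃ lists of labels such that every element of σ₁ lies in ds {β}, σ₂ has length at most 1 with every element equal to α, and every element of σ₃ lies in ds {α, β}. Then (|σ₁ ++ σ₂ ++ σ₃| -s ds {β}) ≼_mul |[α]| = {α}. -/
import Mathlib


open Relation

universe u v

variable {α : Type u} {β : Type v}

/-- down-set of a set of labels -/
def ds (r : β → β → Prop) (S : Set β) : Set β := {b | ∃ a ∈ S, r b a}

/-- down-set of a multiset of labels -/
def dm (r : β → β → Prop) (M : Multiset β) : Set β := ds r {a | a ∈ M}

/-- down-set of a list of labels -/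
def dl (r : β → β → Prop) (σ : List β) : Set β := ds r {a | a ∈ σ}

/-- `M -s S`: remove from the multiset `M` all occurrences of elements of the set `S` -/
noncomputable def msub (M : Multiset β) (S : Set β) : Multiset β :=
  @Multiset.filter β (fun a => a ∉ S) (Classical.decPred _) M

/-- `M ≼_mul N` -/
def mulLe (r : β → β → Prop) (M N : Multiset β) : Prop :=
  ∃ I J K : Multiset β, M = I + K ∧ N = I + J ∧ ∀ k ∈ K, k ∈ dm r J

/-- `M ≺_mul N`: the multiset extension of `r` -/
def mulLt (r : β → β → Prop) (M N : Multiset β) : Prop :=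
  ∃ I J K : Multiset β, M = I + K ∧ N = I + J ∧ (∀ k ∈ K, k ∈ dm r J) ∧ J ≠ 0

/-- the one-step multiset extension of `r` -/
def mult1 (r : β → β → Prop) (M N : Multiset β) : Prop :=
  ∃ (a : β) (I K : Multiset β), M = I + K ∧ N = I + {a} ∧ ∀ b ∈ K, r b a

/-- the lexicographic maximum measure `|σ|` -/
noncomputable def lexmax (r : β → β → Prop) : List β → Multiset β
  | [] => 0
  | a :: σ => {a} + msub (lexmax r σ) (ds r {a})

/-- the quadruple of label lists `(τ, σ, σ', τ')` is decreasing -/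
def Decreasing (r : β → β → Prop) (τ σ σ' τ' : List β) : Prop :=
  mulLe r (lexmax r (σ ++ τ')) (lexmax r τ + lexmax r σ) ∧
  mulLe r (lexmax r (τ ++ σ')) (lexmax r τ + lexmax r σ)

/-- labeled rewrite sequences of the labeled ARS `B` -/
inductive LSeq (B : α → β → α → Prop) : α → List β → α → Prop
  | nil (a : α) : LSeq B a [] a
  | cons {a b c : α} {l : β} {σ : List β} :
      B a l b → LSeq B b σ c → LSeq B a (l :: σ) c

/-- labeled conversions of the labeled ARS `B` -/
inductive Conv (B : α → β → α → Prop) : α → List β → α → Prop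
  | nil (a : α) : Conv B a [] a
  | fwd {a b c : α} {l : β} {σ : List β} :
      B a l b → Conv B b σ c → Conv B a (l :: σ) c
  | bwd {a b c : α} {l : β} {σ : List β} :
      B b l a → Conv B b σ c → Conv B a (l :: σ) c

/-- the local peak `b ←lb a →lc c` is decreasing with respect to conversions -/
def LDConv (B : α → β → α → Prop) (r : β → β → Prop) (b c : α) (lb lc : β) : Prop :=
  ∃ (d b1 b2 c1 c2 : α) (σ1 σ3 τ1 τ3 : List β),
    Conv B b σ1 b1 ∧ (∀ l ∈ σ1, l ∈ ds r ({lc} : Set β)) ∧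
    (b1 = b2 ∨ B b1 lb b2) ∧
    Conv B b2 σ3 d ∧ (∀ l ∈ σ3, l ∈ ds r ({lc, lb} : Set β)) ∧
    Conv B c τ1 c1 ∧ (∀ l ∈ τ1, l ∈ ds r ({lb} : Set β)) ∧
    (c1 = c2 ∨ B c1 lc c2) ∧
    Conv B c2 τ3 d ∧ (∀ l ∈ τ3, l ∈ ds r ({lc, lb} : Set β))

/-- confluence of an abstract rewrite system -/
def Confluent (A : α → α → Prop) : Prop :=
  ∀ a b c : α, ReflTransGen A a b → ReflTransGen A a c →
    ∃ d, ReflTransGen A b d ∧ ReflTransGen A c d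

lemma mem_msub {M : Multiset β} {S : Set β} {a : β} :
    a ∈ msub M S ↔ a ∈ M ∧ a ∉ S := by
  rw [msub]
  exact @Multiset.mem_filter β (fun a => a ∉ S) (Classical.decPred _) a M

lemma msub_le (M : Multiset β) (S : Set β) : msub M S ≤ M := by
  rw [msub]; exact @Multiset.filter_le β _ (Classical.decPred _) M

lemma mem_lexmax_append {r : β → β → Prop} {a : β} {σ τ : List β}
    (h : a ∈ lexmax r (σ ++ τ)) : a ∈ σ ∨ a ∈ lexmax r τ := by
  induction σ with
  | nil => exact Or.inr h
  | cons x σ ih =>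
    simp only [List.cons_append, lexmax, Multiset.mem_add] at h
    rcases h with h | h
    · exact Or.inl (by simp [Multiset.mem_singleton.mp h])
    · rcases ih (mem_msub.mp h).1 with h' | h'
      · exact Or.inl (List.mem_cons_of_mem _ h')
      · exact Or.inr h'

lemma mem_lexmax {r : β → β → Prop} {a : β} {σ : List β}
    (h : a ∈ lexmax r σ) : a ∈ σ := by
  have := mem_lexmax_append (τ := []) (by simpa using h)
  simpa [lexmax] using this

lemma count_lexmax_le [DecidableEq β] (r : β → β → Prop) (a : β) (σ : List β) :
    (lexmax r σ).count a ≤ σ.count a := by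
  induction σ with
  | nil => simp [lexmax]
  | cons x σ ih =>
    simp only [lexmax, Multiset.count_add, Multiset.count_singleton, List.count_cons]
    have h1 : (msub (lexmax r σ) (ds r {x})).count a ≤ (lexmax r σ).count a :=
      Multiset.count_le_of_le a (msub_le _ _)
    rcases eq_or_ne a x with h | h
    · subst h; simp; omega
    · simp [h]; omega


/-- key step towards the alternative formulation of local
decreasingness -/
theorem decomposition_imp_mulLe {β : Type v} (r : β → β → Prop)
    (htrans : Transitive r) (hirrefl : Irreflexive r)
    (la lb : β) (σ1 σ2 σ3 : List β)
    (h1 : ∀ l ∈ σ1, l ∈ ds r ({lb} : Set β))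
    (h2 : σ2.length ≤ 1) (h2' : ∀ l ∈ σ2, l = la)
    (h3 : ∀ l ∈ σ3, l ∈ ds r ({la, lb} : Set β)) :
    mulLe r (msub (lexmax r (σ1 ++ σ2 ++ σ3)) (ds r ({lb} : Set β)))
      ({la} : Multiset β) := by
  classical
  set M := msub (lexmax r (σ1 ++ σ2 ++ σ3)) (ds r ({lb} : Set β)) with hMdef
  have h1' : ∀ l ∈ σ1, r l lb := by
    intro l hl; obtain ⟨a, ha, hra⟩ := h1 l hl
    rw [Set.mem_singleton_iff] at ha; rwa [ha] at hra
  have h3' : ∀ l ∈ σ3, r l la ∨ r l lb := by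
    intro l hl; obtain ⟨a, ha, hra⟩ := h3 l hl
    rcases ha with ha | ha
    · exact Or.inl (ha ▸ hra)
    · exact Or.inr ((Set.mem_singleton_iff.mp ha) ▸ hra)
  have hM : ∀ k ∈ M, k ∈ lexmax r (σ1 ++ σ2 ++ σ3) ∧ ¬ r k lb := by
    intro k hk
    obtain ⟨hk1, hk2⟩ := mem_msub.mp hk
    exact ⟨hk1, fun hr => hk2 ⟨lb, rfl, hr⟩⟩
  have hdm : ∀ k : β, r k la → k ∈ dm r ({la} : Multiset β) := by
    intro k hk
    exact ⟨la, by simp, hk⟩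
  have hσ2 : σ2 = [] ∨ σ2 = [la] := by
    cases σ2 with
    | nil => exact Or.inl rfl
    | cons x l =>
      cases l with
      | nil => exact Or.inr (by rw [h2' x (by simp)])
      | cons y t => simp at h2
  rcases hσ2 with rfl | rfl
  · -- σ2 = []
    refine ⟨0, {la}, M, by simp, by simp, ?_⟩
    intro k hk
    obtain ⟨hk1, hk2⟩ := hM k hk
    rcases mem_lexmax_append hk1 with h | h
    · rw [List.append_nil] at h
      exact absurd (h1' k h) hk2
    · rcases h3' k (mem_lexmax h) with h | h
      · exact hdm k h
      · exact absurd h hk2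
  · -- σ2 = [la]
    have hall : ∀ k ∈ M, k = la := by
      intro k hk
      obtain ⟨hk1, hk2⟩ := hM k hk
      rw [List.append_assoc] at hk1
      rcases mem_lexmax_append hk1 with h | h
      · exact absurd (h1' k h) hk2
      · rw [List.singleton_append] at h
        simp only [lexmax, Multiset.mem_add] at h
        rcases h with h | h
        · exact Multiset.mem_singleton.mp h
        · obtain ⟨hk3, hk4⟩ := mem_msub.mp h
          rcases h3' k (mem_lexmax hk3) with h | h
          · exact absurd (⟨la, rfl, h⟩ : k ∈ ds r {la}) hk4
          · exact absurd h hk2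
    have hcount : M.count la ≤ 1 := by
      by_cases hrla : r la lb
      · have : la ∉ M := fun h => (hM la h).2 hrla
        simp [Multiset.count_eq_zero.mpr this]
      · have hc1 : M.count la ≤ (lexmax r (σ1 ++ [la] ++ σ3)).count la :=
          Multiset.count_le_of_le la (msub_le _ _)
        have hc2 := count_lexmax_le r la (σ1 ++ [la] ++ σ3)
        have hn1 : la ∉ σ1 := fun h => hrla (h1' la h)
        have hn3 : la ∉ σ3 := by
          intro h
          rcases h3' la h with h | h
          · exact hirrefl la h
          · exact hrla h
        have hcl : (σ1 ++ [la] ++ σ3).count la = 1 := by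
          simp [List.count_append, List.count_eq_zero_of_not_mem hn1,
            List.count_eq_zero_of_not_mem hn3]
        omega
    have hrep : M = Multiset.replicate M.card la := Multiset.eq_replicate_card.mpr hall
    have hcard : M.card ≤ 1 := by
      have : M.count la = M.card := by
        conv_lhs => rw [hrep]
        simp [Multiset.count_replicate]
      omega
    interval_cases h : M.card
    · exact ⟨0, {la}, 0, by simpa using hrep, by simp, by simp⟩
    · refine ⟨{la}, 0, 0, ?_, by simp, by simp⟩
      simpa using hrep
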